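/- arXiv:1709.05583 — 2 statements merged into one kernel-verified Lean document; each statement's English description precedes it below -/
import Mathlib

section
/- Let N_bb and N_sb be independent Binomial(n, 1-r) random variables, τ ∈ (0, 1/2), r ∈ (0,1). Then P(N_sb/(N_sb + N_bb) ≤ τ) ≤ exp(-2(1-2τ)²(1-r)²n / (τ² + (1-τ)²)), with the convention that the event includes outcomes with N_sb + N_bb = 0. -/
open MeasureTheory ProbabilityTheory
open scoped ENNReal


open Real

lemma hoeffding_bernoulli {p : ℝ} (hp0 : 0 ≤ p) (hp1 : p ≤ 1) (s : ℝ) :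
    (1 - p) + p * Real.exp s ≤ Real.exp (p * s + s ^ 2 / 8) := by
  set q : ℝ := 1 - p with hq
  have hq0 : 0 ≤ q := by linarith
  set D : ℝ → ℝ := fun x => q + p * Real.exp x with hD
  have hDpos : ∀ x, 0 < D x := by
    intro x
    show 0 < q + p * Real.exp x
    have he := Real.exp_pos x
    rcases le_total 1 (Real.exp x) with h | h
    · nlinarith
    · nlinarith
  have hDderiv : ∀ x, HasDerivAt D (p * Real.exp x) x := by
    intro x
    exact ((Real.hasDerivAt_exp x).const_mul p).const_add q
  set f : ℝ → ℝ := fun x => p * x + x ^ 2 / 8 - Real.log (D x) with hf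
  set f' : ℝ → ℝ := fun x => p + x / 4 - p * Real.exp x / D x with hf'
  set f'' : ℝ → ℝ := fun x => 1 / 4 - p * Real.exp x * q / (D x) ^ 2 with hf''
  have hfderiv : ∀ x, HasDerivAt f (f' x) x := by
    intro x
    have h1 : HasDerivAt (fun x : ℝ => p * x) p x := (hasDerivAt_id x).const_mul p |>.congr_deriv (by ring)
    have h2 : HasDerivAt (fun x : ℝ => x ^ 2 / 8) (x / 4) x := by
      have := (hasDerivAt_pow 2 x).div_const 8
      refine this.congr_deriv ?_
      push_cast
      ring
    have h3 : HasDerivAt (fun x => Real.log (D x)) (p * Real.exp x / D x) x :=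
      (hDderiv x).log (hDpos x).ne'
    exact (h1.add h2).sub h3
  have hf'deriv : ∀ x, HasDerivAt f' (f'' x) x := by
    intro x
    have h1 : HasDerivAt (fun x : ℝ => p + x / 4) (1 / 4) x := by
      have := ((hasDerivAt_id x).div_const 4).const_add p
      exact this
    have h2 : HasDerivAt (fun x => p * Real.exp x / D x)
        ((p * Real.exp x * D x - p * Real.exp x * (p * Real.exp x)) / (D x) ^ 2) x :=
      ((Real.hasDerivAt_exp x).const_mul p).div (hDderiv x) (hDpos x).ne'
    have heq : (p * Real.exp x * D x - p * Real.exp x * (p * Real.exp x)) / (D x) ^ 2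
        = p * Real.exp x * q / (D x) ^ 2 := by
      congr 1
      simp only [hD]
      ring
    rw [heq] at h2
    exact h1.sub h2
  have hf''nonneg : ∀ x, 0 ≤ f'' x := by
    intro x
    have hDx := hDpos x
    have heD := Real.exp_pos x
    have hDxeq : D x = q + p * Real.exp x := rfl
    rw [hf'', sub_nonneg, hDxeq, div_le_iff₀ (by positivity)]
    nlinarith [sq_nonneg (q - p * Real.exp x)]
  have hf'mono : Monotone f' := by
    apply monotone_of_deriv_nonneg (fun x => (hf'deriv x).differentiableAt)
    intro x
    rw [(hf'deriv x).deriv]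
    exact hf''nonneg x
  have hf'0 : f' 0 = 0 := by
    have h1 : D 0 = 1 := by simp [hD, hq]
    simp [hf', h1]
  have hf0 : f 0 = 0 := by
    have h1 : D 0 = 1 := by simp [hD, hq]
    simp [hf, h1]
  have hfdiff : Differentiable ℝ f := fun x => (hfderiv x).differentiableAt
  have hderiv_eq : deriv f = f' := funext fun x => (hfderiv x).deriv
  have hfnonneg : ∀ x, 0 ≤ f x := by
    intro x
    rcases le_total 0 x with hx | hx
    · have hmono : MonotoneOn f (Set.Ici 0) := by
        apply monotoneOn_of_deriv_nonneg (convex_Ici 0) hfdiff.continuous.continuousOn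
          hfdiff.differentiableOn
        intro y hy
        rw [hderiv_eq]
        rw [interior_Ici] at hy
        calc (0:ℝ) = f' 0 := hf'0.symm
          _ ≤ f' y := hf'mono (le_of_lt hy)
      calc (0:ℝ) = f 0 := hf0.symm
        _ ≤ f x := hmono Set.self_mem_Ici hx hx
    · have hanti : AntitoneOn f (Set.Iic 0) := by
        apply antitoneOn_of_deriv_nonpos (convex_Iic 0) hfdiff.continuous.continuousOn
          hfdiff.differentiableOn
        intro y hy
        rw [hderiv_eq]
        rw [interior_Iic] at hy
        calc f' y ≤ f' 0 := hf'mono (le_of_lt hy)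
          _ = 0 := hf'0
      calc (0:ℝ) = f 0 := hf0.symm
        _ ≤ f x := hanti hx Set.self_mem_Iic hx
  have hlog : Real.log (D s) ≤ p * s + s ^ 2 / 8 := by
    have := hfnonneg s
    rw [hf] at this
    linarith
  calc (1 - p) + p * Real.exp s = D s := rfl
    _ ≤ Real.exp (p * s + s ^ 2 / 8) := by
        rw [← Real.exp_log (hDpos s)]
        exact Real.exp_le_exp.2 hlog

open MeasureTheory ProbabilityTheory
open scoped ENNReal

lemma binom_lintegral {Ω : Type*} [MeasurableSpace Ω] (μ : Measure Ω) (n : ℕ) (p r : ℝ)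
    (hp : 0 ≤ p) (hr : 0 ≤ r) (N : Ω → ℕ) (hm : Measurable N)
    (hd : ∀ k, μ {ω | N ω = k} = ENNReal.ofReal ((n.choose k : ℝ) * p ^ k * r ^ (n - k)))
    (s : ℝ) :
    ∫⁻ ω, ENNReal.ofReal (Real.exp (s * N ω)) ∂μ
      = ENNReal.ofReal ((r + p * Real.exp s) ^ n) := by
  have hmap : ∀ k : ℕ, (μ.map N) {k} = ENNReal.ofReal ((n.choose k : ℝ) * p ^ k * r ^ (n - k)) := by
    intro k
    rw [Measure.map_apply hm (measurableSet_singleton k)]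
    have : N ⁻¹' {k} = {ω | N ω = k} := rfl
    rw [this, hd]
  have h1 : ∫⁻ ω, ENNReal.ofReal (Real.exp (s * N ω)) ∂μ
      = ∫⁻ k, ENNReal.ofReal (Real.exp (s * k)) ∂(μ.map N) := by
    rw [lintegral_map (measurable_from_top) hm]
  rw [h1, lintegral_countable']
  have h2 : ∀ k : ℕ, ENNReal.ofReal (Real.exp (s * k)) * (μ.map N) {k}
      = ENNReal.ofReal (Real.exp (s * k) * ((n.choose k : ℝ) * p ^ k * r ^ (n - k))) := by
    intro k
    rw [hmap k, ← ENNReal.ofReal_mul (Real.exp_nonneg _)]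
  simp_rw [h2]
  rw [tsum_eq_sum (s := Finset.range (n + 1)) (by
    intro k hk
    have hkn : n < k := by simpa using Finset.mem_range.not.mp hk
    rw [Nat.choose_eq_zero_of_lt hkn]
    simp)]
  rw [← ENNReal.ofReal_sum_of_nonneg (by
    intro k _
    positivity)]
  congr 1
  rw [add_comm r, add_pow]
  apply Finset.sum_congr rfl
  intro k hk
  rw [mul_pow, ← Real.exp_nat_mul, mul_comm (k:ℝ) s]
  ring


theorem stmt_11 {Ω : Type*} [MeasurableSpace Ω] (μ : Measure Ω)
    [IsProbabilityMeasure μ] (n : ℕ) (r : ℝ) (τ : ℝ) (hτ : τ ∈ Set.Ioo (0:ℝ) (1/2)) (hr : r ∈ Set.Ioo (0:ℝ) 1)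
    (Nbb Nsb : Ω → ℕ) (hmbb : Measurable Nbb) (hmsb : Measurable Nsb)
    (hind : IndepFun Nbb Nsb μ)
    (hdbb : ∀ k, μ {ω | Nbb ω = k} =
      ENNReal.ofReal ((n.choose k : ℝ) * (1 - r) ^ k * r ^ (n - k)))
    (hdsb : ∀ k, μ {ω | Nsb ω = k} =
      ENNReal.ofReal ((n.choose k : ℝ) * (1 - r) ^ k * r ^ (n - k))) :
    (μ {ω | (Nsb ω : ℝ) / ((Nsb ω : ℝ) + (Nbb ω : ℝ)) ≤ τ}).toReal ≤
      Real.exp (-(2 * (1 - 2 * τ) ^ 2 * (1 - r) ^ 2 * n) / (τ ^ 2 + (1 - τ) ^ 2)) := by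
  obtain ⟨hτ0, hτ2⟩ := hτ
  obtain ⟨hr0, hr1⟩ := hr
  set p : ℝ := 1 - r with hpdef
  have hp0 : 0 < p := by simp [hpdef]; linarith
  have hp1 : p ≤ 1 := by simp [hpdef]; linarith
  set S : ℝ := τ ^ 2 + (1 - τ) ^ 2 with hSdef
  have hSpos : 0 < S := by positivity
  set t : ℝ := 4 * p * (1 - 2 * τ) / S with htdef
  have ht : 0 < t := by
    apply div_pos _ hSpos
    have : 0 < 1 - 2 * τ := by linarith
    positivity
  set a : ℝ := t * τ with hadef
  set b : ℝ := t * (1 - τ) with hbdef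
  set E : Set Ω := {ω | (Nsb ω : ℝ) / ((Nsb ω : ℝ) + (Nbb ω : ℝ)) ≤ τ} with hEdef
  set φ : ℕ → ℝ≥0∞ := fun j => ENNReal.ofReal (Real.exp (a * j)) with hφdef
  set ψ : ℕ → ℝ≥0∞ := fun k => ENNReal.ofReal (Real.exp (-b * k)) with hψdef
  -- pointwise bound on E
  have hpt : ∀ ω ∈ E, (1 : ℝ≥0∞) ≤ φ (Nbb ω) * ψ (Nsb ω) := by
    intro ω hω
    set j : ℝ := (Nbb ω : ℝ) with hjdef
    set k : ℝ := (Nsb ω : ℝ) with hkdef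
    have hj : 0 ≤ j := Nat.cast_nonneg _
    have hk : 0 ≤ k := Nat.cast_nonneg _
    have hωE : k / (k + j) ≤ τ := hω
    have hexp : 0 ≤ a * j + -b * k := by
      have key : a * j + -b * k = t * (τ * (k + j) - k) := by
        rw [hadef, hbdef]; ring
      rw [key]
      rcases eq_or_lt_of_le (add_nonneg hk hj) with h0 | h0
      · have hk0 : k = 0 := by linarith
        have hj0 : j = 0 := by linarith
        rw [hk0, hj0]; simp
      · have hle : k ≤ τ * (k + j) := by
          rw [div_le_iff₀ h0] at hωE
          linarith
        exact mul_nonneg ht.le (by linarith)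
    calc (1 : ℝ≥0∞) = ENNReal.ofReal (Real.exp 0) := by simp
      _ ≤ ENNReal.ofReal (Real.exp (a * j + -b * k)) :=
          ENNReal.ofReal_le_ofReal (Real.exp_le_exp.2 hexp)
      _ = φ (Nbb ω) * ψ (Nsb ω) := by
          rw [hφdef, hψdef, ← ENNReal.ofReal_mul (Real.exp_nonneg _), ← Real.exp_add]
  have hmφ : Measurable φ := measurable_from_top
  have hmψ : Measurable ψ := measurable_from_top
  have hmeas_prod : Measurable fun ω => φ (Nbb ω) * ψ (Nsb ω) :=
    (hmφ.comp hmbb).mul (hmψ.comp hmsb)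
  have step1 : μ E ≤ ∫⁻ ω, φ (Nbb ω) * ψ (Nsb ω) ∂μ := by
    calc μ E = ∫⁻ _ in E, 1 ∂μ := (setLIntegral_one E).symm
      _ ≤ ∫⁻ ω in E, φ (Nbb ω) * ψ (Nsb ω) ∂μ := setLIntegral_mono hmeas_prod hpt
      _ ≤ ∫⁻ ω, φ (Nbb ω) * ψ (Nsb ω) ∂μ := setLIntegral_le_lintegral E _
  have hindc : IndepFun (φ ∘ Nbb) (ψ ∘ Nsb) μ :=
    hind.comp hmφ hmψ
  have step2 : ∫⁻ ω, φ (Nbb ω) * ψ (Nsb ω) ∂μ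
      = (∫⁻ ω, φ (Nbb ω) ∂μ) * ∫⁻ ω, ψ (Nsb ω) ∂μ :=
    lintegral_mul_eq_lintegral_mul_lintegral_of_indepFun''
      (hmφ.comp hmbb).aemeasurable
      (hmψ.comp hmsb).aemeasurable hindc
  have step3 : ∫⁻ ω, φ (Nbb ω) ∂μ = ENNReal.ofReal ((r + p * Real.exp a) ^ n) :=
    binom_lintegral μ n p r hp0.le hr0.le Nbb hmbb hdbb a
  have step4 : ∫⁻ ω, ψ (Nsb ω) ∂μ = ENNReal.ofReal ((r + p * Real.exp (-b)) ^ n) :=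
    binom_lintegral μ n p r hp0.le hr0.le Nsb hmsb hdsb (-b)
  have hbound : ∀ s : ℝ, (r + p * Real.exp s) ^ n ≤ Real.exp ((n : ℝ) * (p * s + s ^ 2 / 8)) := by
    intro s
    have h1 : r + p * Real.exp s ≤ Real.exp (p * s + s ^ 2 / 8) := by
      have := hoeffding_bernoulli hp0.le hp1 s
      have hr' : 1 - p = r := by rw [hpdef]; ring
      linarith [this, hr'.symm ▸ this]
    calc (r + p * Real.exp s) ^ n ≤ (Real.exp (p * s + s ^ 2 / 8)) ^ n :=
          pow_le_pow_left₀ (by positivity) h1 n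
      _ = Real.exp ((n : ℝ) * (p * s + s ^ 2 / 8)) := (Real.exp_nat_mul _ n).symm
  have hfin : (μ E) ≤ ENNReal.ofReal
      (Real.exp (-(2 * (1 - 2 * τ) ^ 2 * (1 - r) ^ 2 * n) / (τ ^ 2 + (1 - τ) ^ 2))) := by
    have hexp_eq : (n : ℝ) * (p * a + a ^ 2 / 8) + (n : ℝ) * (p * (-b) + (-b) ^ 2 / 8)
        = -(2 * (1 - 2 * τ) ^ 2 * (1 - r) ^ 2 * n) / (τ ^ 2 + (1 - τ) ^ 2) := by
      rw [hadef, hbdef, htdef, hSdef, hpdef]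
      field_simp
      ring
    calc μ E ≤ (∫⁻ ω, φ (Nbb ω) ∂μ) * ∫⁻ ω, ψ (Nsb ω) ∂μ := step2 ▸ step1
      _ = ENNReal.ofReal ((r + p * Real.exp a) ^ n)
          * ENNReal.ofReal ((r + p * Real.exp (-b)) ^ n) := by rw [step3, step4]
      _ = ENNReal.ofReal ((r + p * Real.exp a) ^ n * (r + p * Real.exp (-b)) ^ n) :=
          (ENNReal.ofReal_mul (by positivity)).symm
      _ ≤ ENNReal.ofReal (Real.exp ((n : ℝ) * (p * a + a ^ 2 / 8))
          * Real.exp ((n : ℝ) * (p * (-b) + (-b) ^ 2 / 8))) := by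
          apply ENNReal.ofReal_le_ofReal
          exact mul_le_mul (hbound a) (hbound (-b)) (by positivity) (Real.exp_nonneg _)
      _ = ENNReal.ofReal
          (Real.exp (-(2 * (1 - 2 * τ) ^ 2 * (1 - r) ^ 2 * n) / (τ ^ 2 + (1 - τ) ^ 2))) := by
          rw [← Real.exp_add, hexp_eq]
  exact ENNReal.toReal_le_of_le_ofReal (Real.exp_nonneg _) hfin
end

section
/- Let N_bb and N_sb be independent Binomial(n, 1-r) random variables, τ ∈ (0, 1/2), r ∈ (0,1). Define α_s = (n - N_bb)/(2n - N_bb - N_sb). Then P(α_s ≤ τ) ≤ exp(-2(1-2τ)² r² n / (τ² + (1-τ)²)). -/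
open MeasureTheory ProbabilityTheory

lemma amgm_aux (a b : ℝ) : a * b ≤ (b + a) ^ 2 / 4 := by nlinarith [sq_nonneg (a - b)]

lemma hoeff_scalar (p : ℝ) (hp0 : 0 ≤ p) (hp1 : p ≤ 1) (c : ℝ) :
    1 - p + p * Real.exp c ≤ Real.exp (p * c + c ^ 2 / 8) := by
  set q : ℝ := 1 - p with hq
  have hq0 : 0 ≤ q := by simp [hq]; linarith
  set g : ℝ → ℝ := fun x => q + p * Real.exp x with hgdef
  have hgpos : ∀ x, 0 < g x := by
    intro x
    rcases eq_or_lt_of_le hp0 with h | h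
    · simp [hgdef, ← h, hq]
    · have := Real.exp_pos x
      have : 0 < p * Real.exp x := by positivity
      simp only [hgdef]; linarith
  have hgd : ∀ x, HasDerivAt g (p * Real.exp x) x := by
    intro x
    exact ((Real.hasDerivAt_exp x).const_mul p).const_add q
  set φ : ℝ → ℝ := fun x => p + x / 4 - p * Real.exp x / g x with hφdef
  set f : ℝ → ℝ := fun x => p * x + x ^ 2 / 8 - Real.log (g x) with hfdef
  have hfd : ∀ x, HasDerivAt f (φ x) x := by
    intro x
    have h1 : HasDerivAt (fun y : ℝ => p * y) p x := by
      simpa using (hasDerivAt_id x).const_mul p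
    have h2 : HasDerivAt (fun y : ℝ => y ^ 2 / 8) (x / 4) x := by
      have := (hasDerivAt_pow 2 x).div_const 8
      refine this.congr_deriv ?_
      norm_num
      ring
    have h3 : HasDerivAt (fun y => Real.log (g y)) (p * Real.exp x / g x) x :=
      (hgd x).log (ne_of_gt (hgpos x))
    exact (h1.add h2).sub h3
  have hφd : ∀ x, HasDerivAt φ (1 / 4 - p * Real.exp x * q / (g x) ^ 2) x := by
    intro x
    have h1 : HasDerivAt (fun y : ℝ => p + y / 4) (1 / 4) x := by
      simpa using ((hasDerivAt_id x).div_const 4).const_add p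
    have h2 : HasDerivAt (fun y => p * Real.exp y / g y)
        ((p * Real.exp x * g x - p * Real.exp x * (p * Real.exp x)) / (g x) ^ 2) x :=
      ((Real.hasDerivAt_exp x).const_mul p).div (hgd x) (ne_of_gt (hgpos x))
    have := h1.sub h2
    refine this.congr_deriv ?_
    have hgx : g x = q + p * Real.exp x := rfl
    field_simp
    ring
  have hφmono : Monotone φ := by
    apply monotone_of_deriv_nonneg (fun x => (hφd x).differentiableAt)
    intro x
    rw [(hφd x).deriv]
    have hkey : p * Real.exp x * q ≤ (g x) ^ 2 / 4 := by
      have hgx : g x = q + p * Real.exp x := rfl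
      rw [hgx]
      exact amgm_aux _ _
    have hg2 : (0:ℝ) < (g x) ^ 2 := pow_pos (hgpos x) 2
    have : p * Real.exp x * q / (g x) ^ 2 ≤ 1 / 4 := by
      rw [div_le_iff₀ hg2]; nlinarith
    linarith
  have hφ0 : φ 0 = 0 := by
    have : g 0 = 1 := by simp [hgdef, hq]
    simp [hφdef, this]
  have hf0 : f 0 = 0 := by
    have : g 0 = 1 := by simp [hgdef, hq]
    simp [hfdef, this]
  have hfnonneg : 0 ≤ f c := by
    rcases le_total 0 c with hc | hc
    · have hmono : MonotoneOn f (Set.Ici (0:ℝ)) := by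
        apply monotoneOn_of_deriv_nonneg (convex_Ici 0)
        · exact fun x _ => ((hfd x).continuousAt).continuousWithinAt
        · exact fun x _ => ((hfd x).differentiableAt).differentiableWithinAt
        · intro x hx
          rw [interior_Ici] at hx
          rw [(hfd x).deriv]
          have := hφmono (le_of_lt hx)
          rw [hφ0] at this
          exact this
      have := hmono (Set.self_mem_Ici) (Set.mem_Ici.2 hc) hc
      linarith [hf0 ▸ this]
    · have hmono : AntitoneOn f (Set.Iic (0:ℝ)) := by
        apply antitoneOn_of_deriv_nonpos (convex_Iic 0)
        · exact fun x _ => ((hfd x).continuousAt).continuousWithinAt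
        · exact fun x _ => ((hfd x).differentiableAt).differentiableWithinAt
        · intro x hx
          rw [interior_Iic] at hx
          rw [(hfd x).deriv]
          have := hφmono (le_of_lt hx)
          rw [hφ0] at this
          exact this
      have := hmono (Set.mem_Iic.2 hc) (Set.self_mem_Iic) hc
      linarith [hf0 ▸ this]
  have hlog : Real.log (g c) ≤ p * c + c ^ 2 / 8 := by
    simp only [hfdef] at hfnonneg
    linarith
  calc 1 - p + p * Real.exp c = g c := rfl
    _ = Real.exp (Real.log (g c)) := (Real.exp_log (hgpos c)).symm
    _ ≤ Real.exp (p * c + c ^ 2 / 8) := Real.exp_le_exp.2 hlog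

lemma binom_mgf (n : ℕ) (r d : ℝ) :
    ∑ j ∈ Finset.range (n+1),
      (n.choose j : ℝ) * (1 - r) ^ j * r ^ (n - j) * Real.exp (d * ((n:ℝ) - (j:ℝ)))
      = (1 - r + r * Real.exp d) ^ n := by
  rw [add_pow]
  apply Finset.sum_congr rfl
  intro j hj
  have hj' : j ≤ n := Nat.lt_succ_iff.mp (Finset.mem_range.mp hj)
  have hcast : (n:ℝ) - (j:ℝ) = ((n - j : ℕ) : ℝ) := by
    rw [Nat.cast_sub hj']
  rw [hcast, mul_comm d, Real.exp_nat_mul, mul_pow]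
  ring

theorem stmt_12 {Ω : Type*} [MeasurableSpace Ω] (μ : Measure Ω)
    [IsProbabilityMeasure μ] (n : ℕ) (r : ℝ) (τ : ℝ) (hτ : τ ∈ Set.Ioo (0:ℝ) (1/2)) (hr : r ∈ Set.Ioo (0:ℝ) 1)
    (Nbb Nsb : Ω → ℕ) (hmbb : Measurable Nbb) (hmsb : Measurable Nsb)
    (hind : IndepFun Nbb Nsb μ)
    (hdbb : ∀ k, μ {ω | Nbb ω = k} =
      ENNReal.ofReal ((n.choose k : ℝ) * (1 - r) ^ k * r ^ (n - k)))
    (hdsb : ∀ k, μ {ω | Nsb ω = k} =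
      ENNReal.ofReal ((n.choose k : ℝ) * (1 - r) ^ k * r ^ (n - k))) :
    (μ {ω | ((n : ℝ) - (Nbb ω : ℝ)) / (2 * (n : ℝ) - (Nbb ω : ℝ) - (Nsb ω : ℝ)) ≤ τ}).toReal ≤
      Real.exp (-(2 * (1 - 2 * τ) ^ 2 * r ^ 2 * n) / (τ ^ 2 + (1 - τ) ^ 2)) := by
  obtain ⟨hτ0, hτh⟩ := hτ
  obtain ⟨hr0, hr1⟩ := hr
  have hs0 : (0:ℝ) < τ ^ 2 + (1 - τ) ^ 2 := by positivity
  have h2τ : (0:ℝ) < 1 - 2 * τ := by linarith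
  set lam : ℝ := 4 * (1 - 2 * τ) * r / (τ ^ 2 + (1 - τ) ^ 2) with hlam
  have hlam0 : (0:ℝ) < lam :=
    div_pos (mul_pos (mul_pos (by norm_num) h2τ) hr0) hs0
  set d1 : ℝ := -(lam * (1 - τ)) with hd1
  set d2 : ℝ := lam * τ with hd2
  set p : ℕ → ℝ := fun j => (n.choose j : ℝ) * (1 - r) ^ j * r ^ (n - j) with hp
  have hp0 : ∀ j, 0 ≤ p j := by
    intro j
    have h1 : (0:ℝ) ≤ 1 - r := by linarith
    have h2 : (0:ℝ) ≤ r := le_of_lt hr0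
    simp only [hp]
    positivity
  set g : ℕ × ℕ → ℝ := fun jk =>
    (p jk.1 * Real.exp (d1 * ((n:ℝ) - (jk.1:ℝ)))) *
    (p jk.2 * Real.exp (d2 * ((n:ℝ) - (jk.2:ℝ)))) with hg
  have hg0 : ∀ jk, 0 ≤ g jk := by
    intro jk
    exact mul_nonneg (mul_nonneg (hp0 _) (Real.exp_nonneg _))
      (mul_nonneg (hp0 _) (Real.exp_nonneg _))
  set T : ℕ × ℕ → Set Ω := fun jk =>
    if ((n:ℝ) - (jk.1:ℝ)) / (2 * (n:ℝ) - (jk.1:ℝ) - (jk.2:ℝ)) ≤ τ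
    then Nbb ⁻¹' {jk.1} ∩ Nsb ⁻¹' {jk.2} else ∅ with hT
  have hsub : {ω | ((n : ℝ) - (Nbb ω : ℝ)) / (2 * (n : ℝ) - (Nbb ω : ℝ) - (Nsb ω : ℝ)) ≤ τ}
      ⊆ ⋃ jk, T jk := by
    intro ω hω
    refine Set.mem_iUnion.2 ⟨(Nbb ω, Nsb ω), ?_⟩
    simp only [hT]
    split_ifs with h
    · exact ⟨rfl, rfl⟩
    · exact absurd hω h
  have hTle : ∀ jk, μ (T jk) ≤ ENNReal.ofReal (g jk) := by
    rintro ⟨j, k⟩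
    simp only [hT]
    split_ifs with hcond
    · rw [hind.measure_inter_preimage_eq_mul {j} {k} (measurableSet_singleton j)
        (measurableSet_singleton k)]
      have h1 : μ (Nbb ⁻¹' {j}) = ENNReal.ofReal (p j) := hdbb j
      have h2 : μ (Nsb ⁻¹' {k}) = ENNReal.ofReal (p k) := hdsb k
      rw [h1, h2, ← ENNReal.ofReal_mul (hp0 j)]
      apply ENNReal.ofReal_le_ofReal
      have hgval : g (j, k) = p j * p k *
          Real.exp (d1 * ((n:ℝ) - (j:ℝ)) + d2 * ((n:ℝ) - (k:ℝ))) := by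
        simp only [hg]
        rw [Real.exp_add]
        ring
      by_cases hjk : j ≤ n ∧ k ≤ n
      · obtain ⟨hjn, hkn⟩ := hjk
        have ha : (0:ℝ) ≤ (n:ℝ) - (j:ℝ) := by
          have : (j:ℝ) ≤ (n:ℝ) := Nat.cast_le.mpr hjn
          linarith
        have hb : (0:ℝ) ≤ (n:ℝ) - (k:ℝ) := by
          have : (k:ℝ) ≤ (n:ℝ) := Nat.cast_le.mpr hkn
          linarith
        have hkey : (1 - τ) * ((n:ℝ) - (j:ℝ)) ≤ τ * ((n:ℝ) - (k:ℝ)) := by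
          rcases eq_or_lt_of_le (add_nonneg ha hb) with h0 | hpos
          · have haz : (n:ℝ) - (j:ℝ) = 0 := by linarith
            have hbz : (n:ℝ) - (k:ℝ) = 0 := by linarith
            rw [haz, hbz]
            simp
          · have hden : 2 * (n:ℝ) - (j:ℝ) - (k:ℝ) = ((n:ℝ) - (j:ℝ)) + ((n:ℝ) - (k:ℝ)) := by
              ring
            rw [hden, div_le_iff₀ hpos] at hcond
            nlinarith
        have harg : 0 ≤ d1 * ((n:ℝ) - (j:ℝ)) + d2 * ((n:ℝ) - (k:ℝ)) := by
          simp only [hd1, hd2]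
          nlinarith [mul_le_mul_of_nonneg_left hkey (le_of_lt hlam0)]
        rw [hgval]
        exact le_mul_of_one_le_right (mul_nonneg (hp0 j) (hp0 k)) (Real.one_le_exp harg)
      · have hz : p j * p k = 0 := by
          rcases not_and_or.mp hjk with h | h
          · have hc : n.choose j = 0 := Nat.choose_eq_zero_of_lt (lt_of_not_ge h)
            simp [hp, hc]
          · have hc : n.choose k = 0 := Nat.choose_eq_zero_of_lt (lt_of_not_ge h)
            simp [hp, hc]
        rw [hz]
        exact hg0 (j, k)
    · simp
  have hgzero : ∀ jk ∉ Finset.range (n+1) ×ˢ Finset.range (n+1),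
      ENNReal.ofReal (g jk) = 0 := by
    rintro ⟨j, k⟩ hjk
    rw [Finset.mem_product] at hjk
    have hz : g (j, k) = 0 := by
      rcases not_and_or.mp hjk with h | h
      · have hc : n.choose j = 0 :=
          Nat.choose_eq_zero_of_lt (by simpa [Nat.lt_succ_iff] using fun hh => h (Finset.mem_range.mpr (Nat.lt_succ_of_le hh)))
        simp [hg, hp, hc]
      · have hc : n.choose k = 0 :=
          Nat.choose_eq_zero_of_lt (by simpa [Nat.lt_succ_iff] using fun hh => h (Finset.mem_range.mpr (Nat.lt_succ_of_le hh)))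
        simp [hg, hp, hc]
    rw [hz]
    simp
  have hfact : ∑ jk ∈ Finset.range (n+1) ×ˢ Finset.range (n+1), g jk =
      (1 - r + r * Real.exp d1) ^ n * (1 - r + r * Real.exp d2) ^ n := by
    rw [Finset.sum_product, ← binom_mgf n r d1, ← binom_mgf n r d2, Finset.sum_mul_sum]
  have hmain : μ {ω | ((n : ℝ) - (Nbb ω : ℝ)) / (2 * (n : ℝ) - (Nbb ω : ℝ) - (Nsb ω : ℝ)) ≤ τ}
      ≤ ENNReal.ofReal ((1 - r + r * Real.exp d1) ^ n * (1 - r + r * Real.exp d2) ^ n) := by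
    calc μ {ω | ((n : ℝ) - (Nbb ω : ℝ)) / (2 * (n : ℝ) - (Nbb ω : ℝ) - (Nsb ω : ℝ)) ≤ τ}
        ≤ μ (⋃ jk, T jk) := measure_mono hsub
      _ ≤ ∑' jk, μ (T jk) := measure_iUnion_le T
      _ ≤ ∑' jk, ENNReal.ofReal (g jk) := ENNReal.tsum_le_tsum hTle
      _ = ∑ jk ∈ Finset.range (n+1) ×ˢ Finset.range (n+1), ENNReal.ofReal (g jk) :=
          tsum_eq_sum hgzero
      _ = ENNReal.ofReal (∑ jk ∈ Finset.range (n+1) ×ˢ Finset.range (n+1), g jk) :=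
          (ENNReal.ofReal_sum_of_nonneg fun i _ => hg0 i).symm
      _ = ENNReal.ofReal ((1 - r + r * Real.exp d1) ^ n * (1 - r + r * Real.exp d2) ^ n) := by
          rw [hfact]
  have hreal : (1 - r + r * Real.exp d1) ^ n * (1 - r + r * Real.exp d2) ^ n ≤
      Real.exp (-(2 * (1 - 2 * τ) ^ 2 * r ^ 2 * n) / (τ ^ 2 + (1 - τ) ^ 2)) := by
    have h1 := hoeff_scalar r (le_of_lt hr0) (le_of_lt hr1) d1
    have h2 := hoeff_scalar r (le_of_lt hr0) (le_of_lt hr1) d2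
    have hb1 : (0:ℝ) ≤ 1 - r + r * Real.exp d1 := by nlinarith [Real.exp_pos d1]
    have hb2 : (0:ℝ) ≤ 1 - r + r * Real.exp d2 := by nlinarith [Real.exp_pos d2]
    calc (1 - r + r * Real.exp d1) ^ n * (1 - r + r * Real.exp d2) ^ n
        ≤ (Real.exp (r * d1 + d1 ^ 2 / 8)) ^ n * (Real.exp (r * d2 + d2 ^ 2 / 8)) ^ n := by
          exact mul_le_mul (pow_le_pow_left₀ hb1 h1 n) (pow_le_pow_left₀ hb2 h2 n)
            (pow_nonneg hb2 n) (pow_nonneg (Real.exp_nonneg _) n)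
      _ = Real.exp ((n:ℝ) * (r * d1 + d1 ^ 2 / 8) + (n:ℝ) * (r * d2 + d2 ^ 2 / 8)) := by
          rw [← Real.exp_nat_mul, ← Real.exp_nat_mul, ← Real.exp_add]
      _ = Real.exp (-(2 * (1 - 2 * τ) ^ 2 * r ^ 2 * n) / (τ ^ 2 + (1 - τ) ^ 2)) := by
          congr 1
          simp only [hd1, hd2, hlam]
          field_simp
          ring
  exact ENNReal.toReal_le_of_le_ofReal (Real.exp_nonneg _)
    (hmain.trans (ENNReal.ofReal_le_ofReal hreal))
end
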